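/- Let A be the 2×2 real matrix with rows (−1, 1) and (1, −1), let l : [0, ∞) → ℝ be continuous with l(t) ≥ l₀ for all t ≥ 0, where l₀ > 0, and let g : [0, ∞) → ℝ² be differentiable with g′(t) = l(t)·(A g(t)) for all t ≥ 0. Then g₁(t) + g₂(t) = g₁(0) + g₂(0) for all t ≥ 0, and if moreover g₁(0) + g₂(0) = 1, then ‖g(t) − (1/2, 1/2)‖ ≤ e^{−2 l₀ t} ‖g(0) − (1/2, 1/2)‖ for all t ≥ 0; in particular g(t) → (1/2, 1/2) as t → ∞. -/

import Mathlib

open Set Filter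

private lemma euclid_comp0 (x : EuclideanSpace ℝ (Fin 2)) :
    (Matrix.toEuclideanLin (!![(-1 : ℝ), 1; 1, -1]) x) 0 = -(x 0) + x 1 := by
  simp [Matrix.toEuclideanLin_apply, Matrix.mulVec, dotProduct, Fin.sum_univ_two,
    Matrix.vecHead, Matrix.vecTail]

private lemma euclid_comp1 (x : EuclideanSpace ℝ (Fin 2)) :
    (Matrix.toEuclideanLin (!![(-1 : ℝ), 1; 1, -1]) x) 1 = x 0 - x 1 := by
  simp [Matrix.toEuclideanLin_apply, Matrix.mulVec, dotProduct, Fin.sum_univ_two,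
    Matrix.vecHead, Matrix.vecTail]
  ring

/-- Let `A = !![-1, 1; 1, -1]`, let `l : [0,∞) → ℝ` be continuous with `l t ≥ l₀ > 0`, and
let `g : [0,∞) → ℝ²` be differentiable with `g' t = l t • (A * g t)` for `t ≥ 0`.  Then the
sum of the components of `g` is conserved, and if the components of `g 0` sum to `1` then
`‖g t - (1/2, 1/2)‖ ≤ e^{-2 l₀ t} ‖g 0 - (1/2, 1/2)‖` for all `t ≥ 0`; in particular
`g t → (1/2, 1/2)` as `t → ∞`. -/
theorem stmt_2 (l₀ : ℝ) (hl₀ : 0 < l₀) (l : ℝ → ℝ)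
    (hl_cont : ContinuousOn l (Set.Ici 0)) (hl : ∀ t ≥ (0 : ℝ), l₀ ≤ l t)
    (g : ℝ → EuclideanSpace ℝ (Fin 2))
    (hg : ∀ t ≥ (0 : ℝ), HasDerivWithinAt g
      (l t • Matrix.toEuclideanLin (!![(-1 : ℝ), 1; 1, -1]) (g t)) (Set.Ici 0) t) :
    (∀ t ≥ (0 : ℝ), g t 0 + g t 1 = g 0 0 + g 0 1) ∧
    (g 0 0 + g 0 1 = 1 →
      (∀ t ≥ (0 : ℝ),
          ‖g t - (WithLp.equiv 2 (Fin 2 → ℝ)).symm ![(1:ℝ)/2, 1/2]‖ ≤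
            Real.exp (-2 * l₀ * t) *
              ‖g 0 - (WithLp.equiv 2 (Fin 2 → ℝ)).symm ![(1:ℝ)/2, 1/2]‖) ∧
      Filter.Tendsto g Filter.atTop
        (nhds ((WithLp.equiv 2 (Fin 2 → ℝ)).symm ![(1:ℝ)/2, 1/2]))) := by
  -- component derivatives
  have hproj : ∀ (i : Fin 2), ∀ t ≥ (0 : ℝ), HasDerivWithinAt (fun t => g t i)
      (l t * ((Matrix.toEuclideanLin (!![(-1 : ℝ), 1; 1, -1]) (g t)) i)) (Ici 0) t := by
    intro i t ht
    have := (EuclideanSpace.proj i (𝕜 := ℝ)).hasFDerivAt.comp_hasDerivWithinAt t (hg t ht)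
    exact this
  have hd0 : ∀ t ≥ (0 : ℝ), HasDerivWithinAt (fun t => g t 0)
      (l t * (-(g t 0) + g t 1)) (Ici 0) t := by
    intro t ht
    simpa [euclid_comp0] using hproj 0 t ht
  have hd1 : ∀ t ≥ (0 : ℝ), HasDerivWithinAt (fun t => g t 1)
      (l t * (g t 0 - g t 1)) (Ici 0) t := by
    intro t ht
    simpa [euclid_comp1] using hproj 1 t ht
  -- sum conserved
  have hsum : ∀ t ≥ (0 : ℝ), g t 0 + g t 1 = g 0 0 + g 0 1 := by
    intro t ht
    have hderiv : ∀ x ∈ Ico (0:ℝ) t, HasDerivWithinAt (fun u => g u 0 + g u 1) 0 (Ici x) x := by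
      intro x hx
      have h := ((hd0 x hx.1).add (hd1 x hx.1)).mono (Ici_subset_Ici.2 hx.1)
      convert h using 1
      · rfl
      · rfl
      · rfl
      ring
    have hcont : ContinuousOn (fun u => g u 0 + g u 1) (Icc 0 t) := by
      intro x hx
      exact (((hd0 x hx.1).add (hd1 x hx.1)).continuousWithinAt).mono
        (fun y hy => hy.1)
    exact constant_of_has_deriv_right_zero hcont hderiv t ⟨ht, le_rfl⟩
  refine ⟨hsum, fun hinit => ?_⟩
  set c : EuclideanSpace ℝ (Fin 2) := (WithLp.equiv 2 (Fin 2 → ℝ)).symm ![(1:ℝ)/2, 1/2] with hc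
  set d : ℝ → ℝ := fun t => g t 0 - g t 1 with hdd
  set L : ℝ → ℝ := fun t => ∫ x in (0:ℝ)..t, l x with hLL
  have hint : ∀ t ≥ (0:ℝ), IntervalIntegrable l MeasureTheory.volume 0 t := by
    intro t ht
    exact (hl_cont.mono (by rw [uIcc_of_le ht]; exact fun x hx => hx.1)).intervalIntegrable
  have hLderiv : ∀ t ≥ (0:ℝ), HasDerivWithinAt L (l t) (Ici t) t := by
    intro t ht
    exact intervalIntegral.integral_hasDerivWithinAt_right (hint t ht)
      ((hl_cont.stronglyMeasurableAtFilter_nhdsWithin measurableSet_Ici t).filter_mono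
        (nhdsWithin_mono t (fun x hx => le_of_lt (lt_of_le_of_lt ht hx))))
      ((hl_cont t ht).mono (fun x hx => le_of_lt (lt_of_le_of_lt ht hx)))
  have hLcont : ∀ b ≥ (0:ℝ), ContinuousOn L (Icc 0 b) := by
    intro b hb
    have := intervalIntegral.continuousOn_primitive_interval
      (f := l) (μ := MeasureTheory.volume) (a := (0:ℝ)) (b := b)
      ((hl_cont.mono (by rw [uIcc_of_le hb]; exact fun x hx => hx.1)).integrableOn_compact
        isCompact_uIcc)
    simpa [uIcc_of_le hb] using this
  -- key decay: d t = d 0 * exp (-(2 * L t))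
  have hkey : ∀ t ≥ (0:ℝ), d t * Real.exp (2 * L t) = d 0 := by
    intro t ht
    have hcont : ContinuousOn (fun u => d u * Real.exp (2 * L u)) (Icc 0 t) := by
      apply ContinuousOn.mul
      · intro x hx
        exact (((hd0 x hx.1).sub (hd1 x hx.1)).continuousWithinAt).mono (fun y hy => hy.1)
      · exact (Real.continuous_exp.comp_continuousOn (continuousOn_const.mul (hLcont t ht)))
    have hderiv : ∀ x ∈ Ico (0:ℝ) t,
        HasDerivWithinAt (fun u => d u * Real.exp (2 * L u)) 0 (Ici x) x := by
      intro x hx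
      have hdx : HasDerivWithinAt d (l x * (-(g x 0) + g x 1) - l x * (g x 0 - g x 1))
          (Ici x) x :=
        (((hd0 x hx.1).sub (hd1 x hx.1))).mono (Ici_subset_Ici.2 hx.1)
      have hex : HasDerivWithinAt (fun u => Real.exp (2 * L u))
          (Real.exp (2 * L x) * (2 * l x)) (Ici x) x :=
        ((hLderiv x hx.1).const_mul 2).exp
      have := hdx.mul hex
      convert this using 1
      · rfl
      · rfl
      · rfl
      simp only [hdd]
      ring
    have := constant_of_has_deriv_right_zero hcont hderiv t ⟨ht, le_rfl⟩
    simpa [hLL, intervalIntegral.integral_same] using this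
  have hLlb : ∀ t ≥ (0:ℝ), l₀ * t ≤ L t := by
    intro t ht
    have h1 : ∫ x in (0:ℝ)..t, l₀ ≤ ∫ x in (0:ℝ)..t, l x := by
      apply intervalIntegral.integral_mono_on ht intervalIntegrable_const (hint t ht)
      intro x hx
      exact hl x hx.1
    simpa [mul_comm] using h1
  have hdbound : ∀ t ≥ (0:ℝ), |d t| ≤ Real.exp (-2 * l₀ * t) * |d 0| := by
    intro t ht
    have hexp_pos : (0:ℝ) < Real.exp (2 * L t) := Real.exp_pos _
    have hdt : d t = d 0 * Real.exp (-(2 * L t)) := by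
      have := hkey t ht
      rw [Real.exp_neg]
      field_simp
      linarith [this]
    rw [hdt, abs_mul, Real.abs_exp, mul_comm]
    apply mul_le_mul_of_nonneg_right _ (abs_nonneg _)
    apply Real.exp_le_exp.2
    have := hLlb t ht
    nlinarith
  -- norm formula
  have hnorm : ∀ t ≥ (0:ℝ), g t 0 + g t 1 = 1 →
      ‖g t - c‖ = |d t| / Real.sqrt 2 := by
    intro t ht hsum1
    have h0 : (g t - c) 0 = d t / 2 := by
      have : c 0 = 1/2 := rfl
      show g t 0 - c 0 = d t / 2
      rw [this]; simp only [hdd]; linarith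
    have h1 : (g t - c) 1 = -(d t) / 2 := by
      have : c 1 = 1/2 := rfl
      show g t 1 - c 1 = -(d t) / 2
      rw [this]; simp only [hdd]; linarith
    rw [EuclideanSpace.norm_eq]
    simp only [Fin.sum_univ_two, Real.norm_eq_abs, sq_abs, h0, h1]
    rw [show (d t / 2) ^ 2 + (-(d t) / 2) ^ 2 = (d t)^2 / 2 by ring]
    rw [Real.sqrt_div (sq_nonneg _), Real.sqrt_sq_eq_abs]
  have hbound : ∀ t ≥ (0:ℝ), ‖g t - c‖ ≤ Real.exp (-2 * l₀ * t) * ‖g 0 - c‖ := by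
    intro t ht
    rw [hnorm t ht (by rw [hsum t ht]; exact hinit), hnorm 0 le_rfl hinit,
      ← mul_div_assoc]
    gcongr
    exact hdbound t ht
  refine ⟨hbound, ?_⟩
  have hC : Tendsto (fun t => Real.exp (-2 * l₀ * t) * ‖g 0 - c‖) atTop (nhds 0) := by
    have h1 : Tendsto (fun t : ℝ => -2 * l₀ * t) atTop atBot :=
      Tendsto.const_mul_atTop_of_neg (by linarith) tendsto_id
    simpa using ((Real.tendsto_exp_atBot.comp h1).mul_const ‖g 0 - c‖)
  have hz : Tendsto (fun t => ‖g t - c‖) atTop (nhds 0) :=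
    squeeze_zero' (Filter.Eventually.of_forall fun t => norm_nonneg _)
      ((eventually_ge_atTop 0).mono fun t ht => hbound t ht) hC
  exact tendsto_iff_norm_sub_tendsto_zero.mpr hz
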